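/- Let a₁,…,a_n be integers and ∂_f the K-linear endomorphism of K[x₁,…,x_n] given by ∂_f(g) = Σᵢ x_i²·∂g/∂x_i + (Σᵢ a_i x_i)·g. If a_{i₀} ≡ 1 (mod p) for some index i₀, then for every j with 1 ≤ j ≤ p−1 one has ker(∂_f^j) = ∂_f^{p−j}(K[x₁,…,x_n]). (This expresses that the p-complex R^f is contractible, i.e., its slash homology vanishes, whenever some coefficient a_i equals 1.) -/

import Mathlib

section Abstract
open Polynomial LinearMap

variable {K V : Type*} [Field K] [AddCommGroup V] [Module K V]
variable (D h : Module.End K V)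

/-- `[D^{m+1}, h] = (m+1) D^m`. -/
lemma weyl_pow_comm (comm : D * h = h * D + 1) :
    ∀ m : ℕ, D ^ (m + 1) * h = h * D ^ (m + 1) + ((m + 1 : ℕ) : K) • D ^ m := by
  intro m
  induction m with
  | zero => simpa using comm
  | succ m ih =>
      have e : D ^ (m + 2) * h = D * (D ^ (m + 1) * h) := by
        rw [← mul_assoc, ← pow_succ']
      rw [e, ih, mul_add, mul_smul_comm, ← mul_assoc, comm, add_mul, one_mul,
        ← pow_succ', mul_assoc, ← pow_succ']
      have e2 : ((m + 1 + 1 : ℕ) : K) = ((m + 1 : ℕ) : K) + 1 := by push_cast; ring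
      rw [e2, add_smul, one_smul]
      abel

lemma weyl_h_range (comm : D * h = h * D + 1) (m : ℕ) (u : V) :
    h ((D ^ (m + 1)) u) ∈ range (D ^ m) := by
  refine ⟨D (h u) - ((m + 1 : ℕ) : K) • u, ?_⟩
  have key := congrArg (fun (T : Module.End K V) => T u) (weyl_pow_comm D h comm m)
  simp only [Module.End.mul_apply, LinearMap.add_apply, LinearMap.smul_apply] at key
  have hps : (D ^ (m + 1)) (h u) = (D ^ m) (D (h u)) := by
    rw [pow_succ, Module.End.mul_apply]
  rw [map_sub, map_smul, ← hps, key]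
  abel

lemma weyl_E_range (comm : D * h = h * D + 1) (m : ℕ) (x : V)
    (hx : x ∈ range (D ^ m)) : h (D x) ∈ range (D ^ m) := by
  obtain ⟨u, rfl⟩ := hx
  have e : D ((D ^ m) u) = (D ^ (m + 1)) u := by rw [pow_succ', Module.End.mul_apply]
  rw [e]
  exact weyl_h_range D h comm m u

lemma weyl_Epow_range (comm : D * h = h * D + 1) (k m : ℕ) (x : V)
    (hx : x ∈ range (D ^ m)) : (((h * D : Module.End K V)) ^ k) x ∈ range (D ^ m) := by
  induction k with
  | zero => simpa using hx
  | succ k ih =>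
      have e : ((h * D : Module.End K V) ^ (k + 1)) x
          = h (D (((h * D : Module.End K V) ^ k) x)) := by
        rw [pow_succ', Module.End.mul_apply, Module.End.mul_apply]
      rw [e]
      exact weyl_E_range D h comm m _ ih

lemma weyl_poly_range (comm : D * h = h * D + 1) (q : K[X]) (m : ℕ) (x : V)
    (hx : x ∈ range (D ^ m)) : (aeval (h * D : Module.End K V) q) x ∈ range (D ^ m) := by
  induction q using Polynomial.induction_on' with
  | add f g hf hg => rw [map_add, LinearMap.add_apply]; exact add_mem hf hg
  | monomial k c =>
      rw [Polynomial.aeval_monomial, Module.End.mul_apply]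
      have := weyl_Epow_range D h comm k m x hx
      have e : ((algebraMap K (Module.End K V)) c) (((h * D : Module.End K V) ^ k) x)
          = c • (((h * D : Module.End K V) ^ k) x) := by
        simp [Module.algebraMap_end_apply]
      rw [e]
      exact Submodule.smul_mem _ c this

/-- `D (hD)^m = (hD+1)^m D`. -/
lemma weyl_shift_pow (comm : D * h = h * D + 1) (m : ℕ) :
    D * (h * D) ^ m = (h * D + 1) ^ m * D := by
  induction m with
  | zero => simp
  | succ m ih =>
      rw [pow_succ, ← mul_assoc, ih, mul_assoc, ← mul_assoc D h D, comm, pow_succ,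
        mul_assoc]

lemma weyl_shift_poly (comm : D * h = h * D + 1) (q : K[X]) :
    D * aeval (h * D : Module.End K V) q
      = aeval (h * D : Module.End K V) (q.comp (X + 1)) * D := by
  induction q using Polynomial.induction_on' with
  | add f g hf hg =>
      rw [map_add, mul_add, hf, hg, Polynomial.add_comp, map_add, add_mul]
  | monomial k c =>
      rw [Polynomial.aeval_monomial, Polynomial.monomial_comp, map_mul, Polynomial.aeval_C,
        map_pow, map_add, Polynomial.aeval_X, map_one]
      rw [← mul_assoc, ← Algebra.commutes c D, mul_assoc, weyl_shift_pow D h comm,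
        ← mul_assoc, mul_assoc]

/-- `D^N h^N = ∏_{t=1}^N (hD + t)`. -/
lemma weyl_prod_id (comm : D * h = h * D + 1) (N : ℕ) :
    D ^ N * h ^ N
      = aeval (h * D : Module.End K V)
          (∏ t ∈ Finset.range N, (X + C ((t + 1 : ℕ) : K))) := by
  induction N with
  | zero => simp
  | succ N ih =>
      have e1 : D ^ (N + 1) * h ^ (N + 1) = D * (D ^ N * h ^ N) * h := by
        rw [pow_succ' D, pow_succ h, mul_assoc, mul_assoc, mul_assoc]
      rw [e1, ih, weyl_shift_poly D h comm, mul_assoc, comm]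
      have e2 : (((∏ t ∈ Finset.range N, (X + C ((t + 1 : ℕ) : K))).comp (X + 1)) * (X + 1))
          = ∏ t ∈ Finset.range (N + 1), (X + C ((t + 1 : ℕ) : K)) := by
        rw [Finset.prod_range_succ' (fun t => (X + C ((t + 1 : ℕ) : K)))]
        rw [Polynomial.prod_comp]
        congr 1
        · refine Finset.prod_congr rfl fun t _ => ?_
          rw [Polynomial.add_comp, Polynomial.X_comp, Polynomial.C_comp]
          have e3 : ((t + 1 + 1 : ℕ) : K) = ((t + 1 : ℕ) : K) + 1 := by push_cast; ring
          rw [e3, map_add, map_one]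
          ring
        · norm_num
      rw [← e2, map_mul]
      congr 1
      rw [map_add, Polynomial.aeval_X, map_one]

end Abstract

section Main
open Polynomial LinearMap

variable {K V : Type*} [Field K] [AddCommGroup V] [Module K V]

lemma weyl_ker_le_range (p : ℕ) (hp : Nat.Prime p) [CharP K p]
    (D h : Module.End K V) (comm : D * h = h * D + 1) (hDp : D ^ p = 0) :
    ∀ j : ℕ, 1 ≤ j → j ≤ p - 1 → ∀ v : V, (D ^ j) v = 0 → v ∈ range (D ^ (p - j)) := by
  intro j
  induction j with
  | zero => omega
  | succ j ih =>
      intro _ hj2 v hv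
      have hp2 : 2 ≤ p := hp.two_le
      set N : ℕ := p - (j + 1) with hN
      have hNp : N < p := by omega
      -- `D v ∈ range (D ^ (p - j))`
      have hDv : D v ∈ range (D ^ (p - j)) := by
        rcases Nat.eq_zero_or_pos j with hj0 | hj0
        · subst hj0
          have : D v = 0 := by simpa using hv
          exact this ▸ zero_mem _
        · refine ih hj0 (by omega) (D v) ?_
          have : (D ^ j) (D v) = (D ^ (j + 1)) v := by
            rw [pow_succ, Module.End.mul_apply]
          rw [this, hv]
      -- `h (D v) ∈ range (D ^ N)`
      have hEv : h (D v) ∈ range (D ^ N) := by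
        obtain ⟨u, hu⟩ := hDv
        have : p - j = N + 1 := by omega
        rw [this] at hu
        rw [← hu]
        exact weyl_h_range D h comm N u
      -- the polynomial ∏ (X + t)
      set P : K[X] := ∏ t ∈ Finset.range N, (X + C ((t + 1 : ℕ) : K)) with hP
      have hid : (D ^ N) ((h ^ N) v) = (aeval (h * D : Module.End K V) (divX P)) (h (D v))
          + (P.coeff 0) • v := by
        have e0 : (D ^ N) ((h ^ N) v) = (D ^ N * h ^ N) v := by
          rw [Module.End.mul_apply]
        rw [e0, weyl_prod_id D h comm N, ← hP]
        conv_lhs => rw [← Polynomial.X_mul_divX_add P]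
        rw [map_add, LinearMap.add_apply]
        congr 1
        · rw [mul_comm, map_mul, Module.End.mul_apply, Polynomial.aeval_X,
            Module.End.mul_apply]
        · rw [Polynomial.aeval_C, Module.algebraMap_end_apply]
      have hc0 : P.coeff 0 = ((Nat.factorial N : ℕ) : K) := by
        rw [Polynomial.coeff_zero_eq_eval_zero, hP, Polynomial.eval_prod,
          ← Finset.prod_range_add_one_eq_factorial, Nat.cast_prod]
        refine Finset.prod_congr rfl fun t _ => ?_
        simp
      have hc0ne : P.coeff 0 ≠ 0 := by
        rw [hc0]
        have : ¬ (p ∣ Nat.factorial N) := by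
          rw [hp.dvd_factorial]
          omega
        simpa [CharP.cast_eq_zero_iff K p] using this
      have hmem : (P.coeff 0) • v ∈ range (D ^ N) := by
        have h1 : (D ^ N) ((h ^ N) v) ∈ range (D ^ N) := ⟨(h ^ N) v, rfl⟩
        have h2 : (aeval (h * D : Module.End K V) (divX P)) (h (D v)) ∈ range (D ^ N) :=
          weyl_poly_range D h comm (divX P) N _ hEv
        have : (P.coeff 0) • v
            = (D ^ N) ((h ^ N) v) - (aeval (h * D : Module.End K V) (divX P)) (h (D v)) := by
          rw [hid]; abel
        rw [this]
        exact sub_mem h1 h2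
      have : v = (P.coeff 0)⁻¹ • ((P.coeff 0) • v) := by
        rw [smul_smul, inv_mul_cancel₀ hc0ne, one_smul]
      rw [this]
      exact Submodule.smul_mem _ _ hmem

lemma weyl_contract (p : ℕ) (hp : Nat.Prime p) [CharP K p]
    (D h : Module.End K V) (comm : D * h = h * D + 1) (hDp : D ^ p = 0)
    (j : ℕ) (hj1 : 1 ≤ j) (hj2 : j ≤ p - 1) :
    LinearMap.ker (D ^ j) = LinearMap.range (D ^ (p - j)) := by
  have hp2 : 2 ≤ p := hp.two_le
  apply le_antisymm
  · intro v hv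
    exact weyl_ker_le_range p hp D h comm hDp j hj1 hj2 v (LinearMap.mem_ker.mp hv)
  · rintro x ⟨u, rfl⟩
    rw [LinearMap.mem_ker]
    have : (D ^ j) ((D ^ (p - j)) u) = (D ^ p) u := by
      rw [← Module.End.mul_apply, ← pow_add]
      congr 2
      omega
    rw [this, hDp]
    rfl

end Main


section Concrete
open MvPolynomial LinearMap

variable {K : Type*} [Field K] {n : ℕ} (a : Fin n → ℤ)

/-- The `i`-th summand of the twisted differential, defined on the monomial basis. -/
noncomputable def Dop (i : Fin n) : Module.End K (MvPolynomial (Fin n) K) :=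
  (basisMonomials (Fin n) K).constr K fun s =>
    (((s i : ℕ) : K) + ((a i : ℤ) : K)) • monomial (s + Finsupp.single i 1) 1

/-- The homotopy operator: (minus) division by `x_{i₀}`, on the monomial basis. -/
noncomputable def hop (i₀ : Fin n) : Module.End K (MvPolynomial (Fin n) K) :=
  (basisMonomials (Fin n) K).constr K fun s =>
    if s i₀ = 0 then 0 else -monomial (s - Finsupp.single i₀ 1) 1

lemma monomial_eq_smul_basis (s : Fin n →₀ ℕ) (c : K) :
    monomial s c = c • (basisMonomials (Fin n) K s) := by
  rw [coe_basisMonomials, smul_monomial, smul_eq_mul, mul_one]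

lemma Dop_monomial (i : Fin n) (s : Fin n →₀ ℕ) (c : K) :
    Dop a i (monomial s c)
      = (((s i : ℕ) : K) + ((a i : ℤ) : K)) • monomial (s + Finsupp.single i 1) c := by
  rw [monomial_eq_smul_basis, map_smul, Dop, Module.Basis.constr_basis, smul_comm,
    monomial_eq_smul_basis (s + Finsupp.single i 1) c]
  simp [coe_basisMonomials]

lemma hop_monomial (i₀ : Fin n) (s : Fin n →₀ ℕ) (c : K) :
    hop i₀ (monomial s c)
      = if s i₀ = 0 then 0 else -monomial (s - Finsupp.single i₀ 1) c := by
  rw [monomial_eq_smul_basis, map_smul, hop, Module.Basis.constr_basis]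
  by_cases hs : s i₀ = 0
  · simp [hs]
  · rw [if_neg hs, if_neg hs, smul_neg, monomial_eq_smul_basis (s - Finsupp.single i₀ 1) c]
    simp [coe_basisMonomials]

end Concrete

section Concrete2
open MvPolynomial LinearMap

variable {K : Type*} [Field K] {n : ℕ} (a : Fin n → ℤ)

lemma term_eq (i : Fin n) (s : Fin n →₀ ℕ) :
    X i ^ 2 * pderiv i (monomial s (1 : K)) + C ((a i : ℤ) : K) * X i * monomial s 1
      = (((s i : ℕ) : K) + ((a i : ℤ) : K)) • monomial (s + Finsupp.single i 1) 1 := by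
  rw [pderiv_monomial, X_pow_eq_monomial, monomial_mul, smul_monomial, smul_eq_mul, mul_one,
    one_mul, one_mul]
  have hX : C ((a i : ℤ) : K) * X i * monomial s (1:K)
      = monomial (s + Finsupp.single i 1) ((a i : ℤ) : K) := by
    rw [C_mul_X_eq_monomial, monomial_mul, mul_one, add_comm]
  rw [hX]
  by_cases hs : s i = 0
  · rw [hs]
    simp
  · have hexp : Finsupp.single i 2 + (s - Finsupp.single i 1) = s + Finsupp.single i 1 := by
      ext j
      rcases eq_or_ne j i with rfl | hj
      · simp only [Finsupp.add_apply, Finsupp.tsub_apply, Finsupp.single_eq_same]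
        omega
      · simp only [Finsupp.add_apply, Finsupp.tsub_apply,
          Finsupp.single_eq_of_ne' (Ne.symm hj)]
        omega
    rw [hexp, ← map_add]

lemma D_monomial (D : MvPolynomial (Fin n) K →ₗ[K] MvPolynomial (Fin n) K)
    (hD : ∀ g, D g = ∑ i, X i ^ 2 * pderiv i g + (∑ i, C ((a i : K)) * X i) * g)
    (s : Fin n →₀ ℕ) :
    D (monomial s 1)
      = ∑ i, (((s i : ℕ) : K) + ((a i : ℤ) : K)) • monomial (s + Finsupp.single i 1) 1 := by
  rw [hD, Finset.sum_mul, ← Finset.sum_add_distrib]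
  refine Finset.sum_congr rfl fun i _ => ?_
  rw [← term_eq a i s, mul_assoc]

lemma D_eq_sum_Dop (D : MvPolynomial (Fin n) K →ₗ[K] MvPolynomial (Fin n) K)
    (hD : ∀ g, D g = ∑ i, X i ^ 2 * pderiv i g + (∑ i, C ((a i : K)) * X i) * g) :
    D = ∑ i, Dop a i := by
  refine (basisMonomials (Fin n) K).ext fun s => ?_
  rw [coe_basisMonomials]
  rw [D_monomial a D hD s, LinearMap.sum_apply]
  refine Finset.sum_congr rfl fun i _ => ?_
  rw [Dop_monomial]

end Concrete2

section Concrete3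
open MvPolynomial LinearMap

variable {K : Type*} [Field K] {n : ℕ} (a : Fin n → ℤ)

lemma weyl_comm_concrete (i₀ : Fin n) (ha1 : ((a i₀ : ℤ) : K) = 1) :
    (∑ i, Dop a i : Module.End K (MvPolynomial (Fin n) K)) * hop i₀
      = hop i₀ * (∑ i, Dop a i) + 1 := by
  refine (basisMonomials (Fin n) K).ext fun s => ?_
  simp only [coe_basisMonomials]
  have hsum : ((∑ i, Dop a i : Module.End K (MvPolynomial (Fin n) K))) (monomial s 1)
      = ∑ i, (((s i : ℕ) : K) + ((a i : ℤ) : K)) • monomial (s + Finsupp.single i 1) 1 := by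
    rw [LinearMap.sum_apply]
    exact Finset.sum_congr rfl fun i _ => Dop_monomial a i s 1
  rw [Module.End.mul_apply, LinearMap.add_apply, Module.End.mul_apply, Module.End.one_apply,
    hop_monomial, hsum, map_sum]
  have happ : ∀ i : Fin n, hop i₀
        ((((s i : ℕ) : K) + ((a i : ℤ) : K)) • monomial (s + Finsupp.single i 1) (1:K))
      = (((s i : ℕ) : K) + ((a i : ℤ) : K)) •
          (if ((s + Finsupp.single i 1 : Fin n →₀ ℕ) i₀) = 0 then (0 : MvPolynomial (Fin n) K)
           else -monomial (s + Finsupp.single i 1 - Finsupp.single i₀ 1) (1:K)) := by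
    intro i
    rw [map_smul, hop_monomial]
  rw [Finset.sum_congr rfl fun i _ => happ i]
  by_cases hs : s i₀ = 0
  · rw [if_pos hs, map_zero]
    rw [Finset.sum_eq_single i₀]
    · have : ((s + Finsupp.single i₀ 1 : Fin n →₀ ℕ) i₀) = 1 := by
        simp [Finsupp.add_apply, hs]
      rw [this]
      simp only [one_ne_zero, if_neg, Nat.cast_zero]
      rw [hs, ha1, Nat.cast_zero, zero_add, one_smul, add_tsub_cancel_right]
      simp
    · intro i _ hi
      have : ((s + Finsupp.single i 1 : Fin n →₀ ℕ) i₀) = 0 := by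
        simp [Finsupp.add_apply, hs, Finsupp.single_eq_of_ne' hi]
      rw [this, if_pos rfl, smul_zero]
    · intro habs
      exact absurd (Finset.mem_univ i₀) habs
  · -- s i₀ ≠ 0
    rw [if_neg hs, map_neg]
    have hDneg : (∑ i, Dop a i : Module.End K (MvPolynomial (Fin n) K))
          (monomial (s - Finsupp.single i₀ 1) 1)
        = ∑ i, ((((s - Finsupp.single i₀ 1 : Fin n →₀ ℕ) i : ℕ) : K) + ((a i : ℤ) : K)) •
            monomial (s - Finsupp.single i₀ 1 + Finsupp.single i 1) 1 := by
      rw [LinearMap.sum_apply]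
      exact Finset.sum_congr rfl fun i _ => Dop_monomial a i _ 1
    rw [hDneg]
    have hif : ∀ i : Fin n,
        (if ((s + Finsupp.single i 1 : Fin n →₀ ℕ) i₀) = 0 then (0 : MvPolynomial (Fin n) K)
         else -monomial (s + Finsupp.single i 1 - Finsupp.single i₀ 1) 1)
        = -monomial (s - Finsupp.single i₀ 1 + Finsupp.single i 1) 1 := by
      intro i
      have h1 : ((s + Finsupp.single i 1 : Fin n →₀ ℕ) i₀) ≠ 0 := by
        simp only [Finsupp.add_apply]
        omega
      rw [if_neg h1]
      have h2 : s + Finsupp.single i 1 - Finsupp.single i₀ 1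
          = s - Finsupp.single i₀ 1 + Finsupp.single i 1 := by
        have h0 : s i₀ ≠ 0 := hs
        ext j
        rcases eq_or_ne i₀ j with rfl | hj
        · rcases eq_or_ne i i₀ with rfl | hij
          · simp only [Finsupp.add_apply, Finsupp.tsub_apply, Finsupp.single_eq_same]
            omega
          · simp only [Finsupp.add_apply, Finsupp.tsub_apply, Finsupp.single_eq_same,
              Finsupp.single_eq_of_ne' hij]
            omega
        · rcases eq_or_ne i j with rfl | hij
          · simp only [Finsupp.add_apply, Finsupp.tsub_apply, Finsupp.single_eq_same,
              Finsupp.single_eq_of_ne' hj]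
            omega
          · simp only [Finsupp.add_apply, Finsupp.tsub_apply,
              Finsupp.single_eq_of_ne' hj, Finsupp.single_eq_of_ne' hij]
            omega
      rw [h2]
    have hsum2 : (∑ i : Fin n, (((s i : ℕ) : K) + ((a i : ℤ) : K)) •
          (if ((s + Finsupp.single i 1 : Fin n →₀ ℕ) i₀) = 0 then (0 : MvPolynomial (Fin n) K)
           else -monomial (s + Finsupp.single i 1 - Finsupp.single i₀ 1) (1:K)))
        = ∑ i : Fin n, (((s i : ℕ) : K) + ((a i : ℤ) : K)) •
            -monomial (s - Finsupp.single i₀ 1 + Finsupp.single i 1) (1:K) :=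
      Finset.sum_congr rfl fun i _ => by rw [hif i]
    rw [hsum2]
    -- now both sides are sums over i of scalars times the same monomials
    have key : ∀ i : Fin n,
        (((s i : ℕ) : K) + ((a i : ℤ) : K)) •
            -monomial (s - Finsupp.single i₀ 1 + Finsupp.single i 1) (1:K)
        = -(((((s - Finsupp.single i₀ 1 : Fin n →₀ ℕ) i : ℕ) : K) + ((a i : ℤ) : K)) •
            monomial (s - Finsupp.single i₀ 1 + Finsupp.single i 1) 1)
          - (if i = i₀ then monomial s 1 else 0) := by
      intro i
      rcases eq_or_ne i i₀ with rfl | hi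
      · rw [if_pos rfl]
        have hv : ((s - Finsupp.single i 1 : Fin n →₀ ℕ) i : ℕ) = s i - 1 := by
          simp [Finsupp.tsub_apply]
        have hcast : (((s i - 1 : ℕ)) : K) = ((s i : ℕ) : K) - 1 := by
          have h1 : 1 ≤ s i := Nat.one_le_iff_ne_zero.mpr hs
          push_cast [h1]
          ring
        have hexp : s - Finsupp.single i 1 + Finsupp.single i 1 = s := by
          have h1 : s i ≠ 0 := hs
          ext j
          rcases eq_or_ne i j with rfl | hj
          · simp only [Finsupp.add_apply, Finsupp.tsub_apply, Finsupp.single_eq_same]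
            omega
          · simp only [Finsupp.add_apply, Finsupp.tsub_apply, Finsupp.single_eq_of_ne' hj]
            omega
        rw [hv, hcast, hexp, smul_neg]
        have hco : ((s i : ℕ) : K) + ((a i : ℤ) : K)
            = (((s i : ℕ) : K) - 1 + ((a i : ℤ) : K)) + 1 := by ring
        rw [hco, add_smul, one_smul]
        abel
      · rw [if_neg hi]
        have hv : ((s - Finsupp.single i₀ 1 : Fin n →₀ ℕ) i : ℕ) = s i := by
          simp [Finsupp.tsub_apply, Finsupp.single_eq_of_ne' (Ne.symm hi)]
        rw [hv, smul_neg, sub_zero]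
    have hsum3 : (∑ i : Fin n, (((s i : ℕ) : K) + ((a i : ℤ) : K)) •
          -monomial (s - Finsupp.single i₀ 1 + Finsupp.single i 1) (1:K))
        = ∑ i : Fin n,
            (-(((((s - Finsupp.single i₀ 1 : Fin n →₀ ℕ) i : ℕ) : K) + ((a i : ℤ) : K)) •
              monomial (s - Finsupp.single i₀ 1 + Finsupp.single i 1) 1)
            - (if i = i₀ then monomial s 1 else 0)) :=
      Finset.sum_congr rfl fun i _ => key i
    have hlast : (∑ i : Fin n, if i = i₀ then monomial s (1:K) else 0)
        = monomial s (1:K) := by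
      rw [Finset.sum_ite_eq' Finset.univ i₀ (fun _ => monomial s (1:K))]
      simp
    rw [hsum3, Finset.sum_sub_distrib, hlast, Finset.sum_neg_distrib]
    abel

end Concrete3

section Concrete4
open MvPolynomial LinearMap

variable {K : Type*} [Field K] {n : ℕ} (a : Fin n → ℤ)

lemma Dop_pow_monomial (i : Fin n) (m : ℕ) (s : Fin n →₀ ℕ) :
    ((Dop a i : Module.End K (MvPolynomial (Fin n) K)) ^ m) (monomial s 1)
      = (∏ t ∈ Finset.range m, (((s i : ℕ) : K) + ((a i : ℤ) : K) + (t : ℕ))) •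
          monomial (s + Finsupp.single i m) 1 := by
  induction m generalizing s with
  | zero => simp
  | succ m ih =>
      rw [pow_succ, Module.End.mul_apply, Dop_monomial, map_smul, ih]
      rw [smul_smul]
      have hval : (((s + Finsupp.single i 1 : Fin n →₀ ℕ) i : ℕ) : K) = ((s i : ℕ) : K) + 1 := by
        simp [Finsupp.add_apply]
      rw [hval]
      have hexp : s + Finsupp.single i 1 + Finsupp.single i m = s + Finsupp.single i (m + 1) := by
        rw [add_assoc, ← Finsupp.single_add, add_comm 1 m]
      rw [hexp]
      congr 1
      rw [Finset.prod_range_succ' (fun t : ℕ => (((s i : ℕ) : K) + ((a i : ℤ) : K) + (t : ℕ)))]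
      have hcongr : (∏ t ∈ Finset.range m, (((s i : ℕ) : K) + 1 + ((a i : ℤ) : K) + ((t : ℕ) : K)))
          = ∏ t ∈ Finset.range m, (((s i : ℕ) : K) + ((a i : ℤ) : K) + (((t + 1 : ℕ)) : K)) :=
        Finset.prod_congr rfl fun t _ => by push_cast; ring
      rw [hcongr]
      push_cast
      ring

lemma Dop_pow_p (p : ℕ) (hp : Nat.Prime p) [CharP K p] (i : Fin n) :
    (Dop a i : Module.End K (MvPolynomial (Fin n) K)) ^ p = 0 := by
  refine (basisMonomials (Fin n) K).ext fun s => ?_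
  simp only [coe_basisMonomials]
  rw [Dop_pow_monomial]
  set z : ℤ := (s i : ℤ) + a i with hz
  have hppos : (0:ℤ) < (p:ℤ) := by exact_mod_cast hp.pos
  set t₀ : ℕ := ((-z) % (p:ℤ)).toNat with ht₀
  have hnn : 0 ≤ (-z) % (p:ℤ) := Int.emod_nonneg _ (by positivity)
  have htlt : t₀ < p := by
    have := Int.emod_lt_of_pos (-z) hppos
    omega
  have hfac : (((s i : ℕ) : K) + ((a i : ℤ) : K) + (t₀ : ℕ)) = 0 := by
    have hcast : (((s i : ℕ) : K) + ((a i : ℤ) : K) + ((t₀ : ℕ) : K))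
        = (((z + t₀ : ℤ)) : K) := by
      push_cast [hz]
      ring
    rw [hcast]
    rw [(CharP.intCast_eq_zero_iff K p _)]
    have htz : (t₀ : ℤ) = (-z) % (p:ℤ) := Int.toNat_of_nonneg hnn
    rw [htz, Int.emod_def]
    refine ⟨-((-z) / (p:ℤ)), by ring⟩
  rw [Finset.prod_eq_zero (Finset.mem_range.mpr htlt) hfac, zero_smul]
  rfl

lemma Dop_commute (i k : Fin n) :
    Commute (Dop a i : Module.End K (MvPolynomial (Fin n) K)) (Dop a k) := by
  rcases eq_or_ne i k with rfl | hik
  · exact Commute.refl _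
  · unfold Commute SemiconjBy
    refine (basisMonomials (Fin n) K).ext fun s => ?_
    simp only [coe_basisMonomials]
    rw [Module.End.mul_apply, Module.End.mul_apply, Dop_monomial, Dop_monomial,
      map_smul, map_smul, Dop_monomial, Dop_monomial]
    have e1 : (((s + Finsupp.single k 1 : Fin n →₀ ℕ) i : ℕ) : K) = ((s i : ℕ) : K) := by
      simp [Finsupp.add_apply, Finsupp.single_eq_of_ne' (Ne.symm hik)]
    have e2 : (((s + Finsupp.single i 1 : Fin n →₀ ℕ) k : ℕ) : K) = ((s k : ℕ) : K) := by
      simp [Finsupp.add_apply, Finsupp.single_eq_of_ne' hik]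
    rw [e1, e2, smul_smul, smul_smul]
    rw [add_right_comm s (Finsupp.single k 1) (Finsupp.single i 1), mul_comm]

lemma sum_pow_char_commute {R : Type*} [Ring R] (p : ℕ) [Fact p.Prime] [CharP R p]
    {ι : Type*} (s : Finset ι) (f : ι → R)
    (hc : ∀ i ∈ s, ∀ j ∈ s, Commute (f i) (f j)) :
    (∑ i ∈ s, f i) ^ p = ∑ i ∈ s, f i ^ p := by
  have hp' : p.Prime := Fact.out
  classical
  induction s using Finset.induction_on with
  | empty => simp [zero_pow hp'.ne_zero]
  | @insert b s' hnotmem ih =>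
      rw [Finset.sum_insert hnotmem, Finset.sum_insert hnotmem]
      have hcom : Commute (f b) (∑ i ∈ s', f i) :=
        Commute.sum_right _ _ _ fun i hi =>
          hc b (Finset.mem_insert_self b s') i (Finset.mem_insert_of_mem hi)
      rw [add_pow_char_of_commute _ hcom]
      rw [ih fun i hi j hj =>
        hc i (Finset.mem_insert_of_mem hi) j (Finset.mem_insert_of_mem hj)]

end Concrete4


open MvPolynomial

/-- If some coefficient `a_{i₀}` of `f = Σᵢ a_i x_i` is congruent to `1` mod `p`, then the
twisted `p`-complex `R^f` is contractible: `ker(∂_f^j) = im(∂_f^{p−j})` for `1 ≤ j ≤ p−1`. -/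
theorem twisted_complex_contractible (p : ℕ) (hp : Nat.Prime p) (hodd : Odd p)
    (K : Type*) [Field K] [CharP K p] (n : ℕ) (hn : 0 < n) (a : Fin n → ℤ)
    (D : MvPolynomial (Fin n) K →ₗ[K] MvPolynomial (Fin n) K)
    (hD : ∀ g, D g = ∑ i, X i ^ 2 * pderiv i g + (∑ i, C ((a i : K)) * X i) * g)
    (i₀ : Fin n) (ha : a i₀ ≡ 1 [ZMOD (p : ℤ)])
    (j : ℕ) (hj1 : 1 ≤ j) (hj2 : j ≤ p - 1) :
    LinearMap.ker (D ^ j) = LinearMap.range (D ^ (p - j)) := by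
  haveI := Fact.mk hp
  haveI hCharEnd : CharP (Module.End K (MvPolynomial (Fin n) K)) p :=
    charP_of_injective_algebraMap' K p
  have ha1 : ((a i₀ : ℤ) : K) = 1 := by
    have hdvd : (p : ℤ) ∣ (1 - a i₀) := Int.ModEq.dvd ha
    have h0 := (CharP.intCast_eq_zero_iff K p (1 - a i₀)).mpr hdvd
    push_cast at h0
    rw [sub_eq_zero] at h0
    exact h0.symm
  have hDsum : D = ∑ i, Dop a i := D_eq_sum_Dop a D hD
  have hcomm : D * hop i₀ = hop i₀ * D + 1 := by
    rw [hDsum]; exact weyl_comm_concrete a i₀ ha1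
  have hDp : D ^ p = 0 := by
    rw [hDsum, sum_pow_char_commute (R := Module.End K (MvPolynomial (Fin n) K)) p
      Finset.univ (fun i => Dop a i) (fun i _ k _ => Dop_commute a i k)]
    exact Finset.sum_eq_zero fun i _ => Dop_pow_p a p hp i
  exact weyl_contract p hp D (hop i₀) hcomm hDp j hj1 hj2
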